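/- arXiv:2407.04313 — 6 statements merged into one kernel-verified Lean document; each statement's English description precedes it below -/
import Mathlib

section
/- Let φ ∈ C(ℝ,X) be comparable by character of recurrence with ψ ∈ C(ℝ,Y). If ψ is almost recurrent in the sense of Bebutov, then φ is almost recurrent in the sense of Bebutov. -/
open Filter Topology

/-- The Bebutov metric on `C(ℝ, X)`:
`d(φ₁,φ₂) = sup_{T>0} min ( max_{|t| ≤ T} ρ(φ₁(t), φ₂(t)), 1/T )`. -/
noncomputable def bebutovDist {X : Type*} [MetricSpace X] (φ ψ : C(ℝ, X)) : ℝ :=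
  ⨆ T : Set.Ioi (0 : ℝ),
    min (⨆ t : Set.Icc (-(T : ℝ)) (T : ℝ), dist (φ t.1) (ψ t.1)) (1 / (T : ℝ))

/-- The translate `φ^h` of `φ ∈ C(ℝ,X)`, given by `φ^h(t) = φ(t + h)`. -/
def timeShift {X : Type*} [MetricSpace X] (φ : C(ℝ, X)) (h : ℝ) : C(ℝ, X) :=
  ⟨fun t => φ (t + h), φ.continuous.comp (continuous_id.add continuous_const)⟩

/-- `𝔑_φ`: the family of sequences `{tₙ} ⊂ ℝ` with `φ^{tₙ} → φ` in `(C(ℝ,X),d)`. -/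
def NClass {X : Type*} [MetricSpace X] (φ : C(ℝ, X)) : Set (ℕ → ℝ) :=
  {t | Tendsto (fun n => bebutovDist (timeShift φ (t n)) φ) atTop (𝓝 0)}

/-- `𝔐_φ`: the family of sequences `{tₙ} ⊂ ℝ` such that `{φ^{tₙ}}` converges in
`(C(ℝ,X),d)`. -/
def MClass {X : Type*} [MetricSpace X] (φ : C(ℝ, X)) : Set (ℕ → ℝ) :=
  {t | ∃ ψ : C(ℝ, X), Tendsto (fun n => bebutovDist (timeShift φ (t n)) ψ) atTop (𝓝 0)}

/-- `𝔑^u_φ`: sequences in `𝔑_φ` with `φ^{s+tₙ} → φ^s` uniformly in `s ∈ ℝ`. -/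
def NuClass {X : Type*} [MetricSpace X] (φ : C(ℝ, X)) : Set (ℕ → ℝ) :=
  {t | t ∈ NClass φ ∧ ∀ ε > (0 : ℝ), ∃ N : ℕ, ∀ n ≥ N, ∀ s : ℝ,
    bebutovDist (timeShift φ (s + t n)) (timeShift φ s) < ε}

/-- `𝔐^u_φ`: sequences in `𝔐_φ` such that `{φ^{s+tₙ}}` converges uniformly in `s ∈ ℝ`. -/
def MuClass {X : Type*} [MetricSpace X] (φ : C(ℝ, X)) : Set (ℕ → ℝ) :=
  {t | t ∈ MClass φ ∧ ∃ ψ : ℝ → C(ℝ, X), ∀ ε > (0 : ℝ), ∃ N : ℕ, ∀ n ≥ N, ∀ s : ℝ,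
    bebutovDist (timeShift φ (s + t n)) (ψ s) < ε}

/-- A subset `S ⊆ ℝ` is relatively dense if some length `l > 0` interval always meets it. -/
def RelativelyDense (S : Set ℝ) : Prop :=
  ∃ l > (0 : ℝ), ∀ a : ℝ, ∃ τ ∈ S, τ ∈ Set.Icc a (a + l)

/-- `φ` is Poisson stable: for every `ε > 0` and `l > 0` there are `ε`-shifts `τ₊ > l`
and `τ₋ < −l`. -/
def PoissonStable {X : Type*} [MetricSpace X] (φ : C(ℝ, X)) : Prop :=
  ∀ ε > (0 : ℝ), ∀ l > (0 : ℝ),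
    (∃ τ : ℝ, l < τ ∧ bebutovDist (timeShift φ τ) φ < ε) ∧
    (∃ τ : ℝ, τ < -l ∧ bebutovDist (timeShift φ τ) φ < ε)

/-- `φ` is almost recurrent in the sense of Bebutov. -/
def AlmostRecurrent {X : Type*} [MetricSpace X] (φ : C(ℝ, X)) : Prop :=
  ∀ ε > (0 : ℝ), RelativelyDense {τ : ℝ | bebutovDist (timeShift φ τ) φ < ε}

/-- `τ` is an `ε`-almost period of `φ`: `ρ(φ(t+τ),φ(t)) < ε` for all `t`. -/
def IsAlmostPeriod {X : Type*} [MetricSpace X] (φ : C(ℝ, X)) (ε τ : ℝ) : Prop :=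
  ∀ t : ℝ, dist (φ (t + τ)) (φ t) < ε

/-- `φ` is Bohr almost periodic: its set of `ε`-almost periods is relatively dense for
every `ε > 0`. -/
def BohrAlmostPeriodic {X : Type*} [MetricSpace X] (φ : C(ℝ, X)) : Prop :=
  ∀ ε > (0 : ℝ), RelativelyDense {τ : ℝ | IsAlmostPeriod φ ε τ}

/-- `φ` is Lagrange stable: every sequence of translates has a subsequence converging in
the Bebutov metric (i.e. `{φ^h : h ∈ ℝ}` is relatively compact in `(C(ℝ,X),d)`). -/
def LagrangeStable {X : Type*} [MetricSpace X] (φ : C(ℝ, X)) : Prop :=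
  ∀ h : ℕ → ℝ, ∃ (k : ℕ → ℕ) (ψ : C(ℝ, X)), StrictMono k ∧
    Tendsto (fun n => bebutovDist (timeShift φ (h (k n))) ψ) atTop (𝓝 0)

/-- `φ` is Birkhoff recurrent: almost recurrent and Lagrange stable. -/
def BirkhoffRecurrent {X : Type*} [MetricSpace X] (φ : C(ℝ, X)) : Prop :=
  AlmostRecurrent φ ∧ LagrangeStable φ

/-- `φ` is Levitan almost periodic. -/
def LevitanAlmostPeriodic {X : Type*} [MetricSpace X] (φ : C(ℝ, X)) : Prop :=
  ∃ (Z : Type) (_ : MetricSpace Z) (_ : CompleteSpace Z) (χ : C(ℝ, Z)),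
    BohrAlmostPeriodic χ ∧
    ∀ ε > (0 : ℝ), ∃ δ > (0 : ℝ), ∀ τ : ℝ, IsAlmostPeriod χ δ τ →
      bebutovDist (timeShift φ τ) φ < ε

/-- `φ` is quasi-periodic with the spectrum of frequencies `ν₁,…,ν_k`. -/
def QuasiPeriodic {X : Type*} [MetricSpace X] (φ : C(ℝ, X)) {k : ℕ} (ν : Fin k → ℝ) :
    Prop :=
  LinearIndependent ℚ ν ∧
  ∃ Φ : C((Fin k → ℝ), X),
    (∀ v : Fin k → ℝ, Φ (fun i => v i + 2 * Real.pi) = Φ v) ∧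
    ∀ t : ℝ, φ t = Φ (fun i => ν i * t)

/-- `φ` is pseudo-periodic: for every `ε > 0` and `l > 0` there exist `ε`-almost
periods `τ₊ > l` and `τ₋ < −l`. -/
def PseudoPeriodic {X : Type*} [MetricSpace X] (φ : C(ℝ, X)) : Prop :=
  ∀ ε > (0 : ℝ), ∀ l > (0 : ℝ),
    (∃ τ : ℝ, l < τ ∧ IsAlmostPeriod φ ε τ) ∧
    (∃ τ : ℝ, τ < -l ∧ IsAlmostPeriod φ ε τ)

/-- `φ` is pseudo-recurrent. -/
def PseudoRecurrent {X : Type*} [MetricSpace X] (φ : C(ℝ, X)) : Prop :=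
  ∀ ε > (0 : ℝ), ∀ l : ℝ, ∃ L : ℝ, l ≤ L ∧ ∀ τ₀ : ℝ, ∃ τ ∈ Set.Icc l L,
    ∀ t : ℝ, |t| ≤ 1 / ε → dist (φ (t + τ₀ + τ)) (φ (t + τ₀)) ≤ ε

lemma bebutovDist_nonneg' {X : Type*} [MetricSpace X] (φ ψ : C(ℝ, X)) :
    0 ≤ bebutovDist φ ψ := by
  unfold bebutovDist
  refine Real.iSup_nonneg fun T => le_min (Real.iSup_nonneg fun t => dist_nonneg) ?_
  have := T.2
  simp only [Set.mem_Ioi] at this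
  positivity

/-- If `φ` is comparable by character of recurrence with `ψ` (`𝔑_ψ ⊆ 𝔑_φ`) and `ψ` is
almost recurrent in the sense of Bebutov, then so is `φ`. -/
theorem almostRecurrent_of_comparable
    {X Y : Type*} [MetricSpace X] [CompleteSpace X] [MetricSpace Y] [CompleteSpace Y]
    (φ : C(ℝ, X)) (ψ : C(ℝ, Y)) (h : NClass ψ ⊆ NClass φ)
    (hψ : AlmostRecurrent ψ) : AlmostRecurrent φ := by
  intro ε hε
  by_contra hnd
  unfold RelativelyDense at hnd
  push_neg at hnd
  -- hnd : ∀ l > 0, ∃ a, ∀ τ ∈ S_φ, τ ∉ Icc a (a+l)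
  -- For each n, get ψ's relatively dense 1/(n+1)-shift set, with length l n
  have key : ∀ n : ℕ, ∃ τ : ℝ,
      bebutovDist (timeShift ψ τ) ψ < 1 / (n + 1) ∧
      ¬ bebutovDist (timeShift φ τ) φ < ε := by
    intro n
    obtain ⟨l, hl, hdense⟩ := hψ (1 / (n + 1)) (by positivity)
    obtain ⟨a, ha⟩ := hnd l hl
    obtain ⟨τ, hτS, hτI⟩ := hdense a
    exact ⟨τ, hτS, fun hc => ha τ hc hτI⟩
  choose t htψ htφ using key
  have htN : t ∈ NClass ψ := by
    refine squeeze_zero (fun n => bebutovDist_nonneg' _ _)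
      (fun n => le_of_lt (htψ n)) ?_
    exact tendsto_one_div_add_atTop_nhds_zero_nat
  have htNφ := h htN
  have : ∀ᶠ n in atTop, bebutovDist (timeShift φ (t n)) φ < ε := by
    have := htNφ.eventually (Metric.ball_mem_nhds 0 hε)
    refine this.mono fun n hn => ?_
    simpa [Real.dist_eq, abs_of_nonneg (bebutovDist_nonneg' _ _)] using hn
  obtain ⟨n, hn⟩ := this.exists
  exact htφ n hn
end

section
/- Let φ ∈ C(ℝ,X) be uniformly comparable by character of recurrence with ψ ∈ C(ℝ,Y). If ψ is Bohr almost periodic, then φ is Bohr almost periodic. -/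
open Filter Topology

namespace BebAux

variable {X : Type*} [MetricSpace X]

noncomputable def bSup (f g : C(ℝ, X)) (T : ℝ) : ℝ :=
  ⨆ t : Set.Icc (-T) T, dist (f t.1) (g t.1)

lemma bebutov_eq (f g : C(ℝ, X)) :
    bebutovDist f g = ⨆ T : Set.Ioi (0 : ℝ), min (bSup f g T.1) (1 / (T : ℝ)) := rfl

lemma bSup_bdd (f g : C(ℝ, X)) (T : ℝ) :
    BddAbove (Set.range fun t : Set.Icc (-T) T => dist (f t.1) (g t.1)) := by
  have h := IsCompact.bddAbove_image (isCompact_Icc (a := -T) (b := T))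
    ((f.continuous.dist g.continuous).continuousOn)
  rwa [Set.image_eq_range] at h

lemma le_bSup (f g : C(ℝ, X)) {T t : ℝ} (ht : t ∈ Set.Icc (-T) T) :
    dist (f t) (g t) ≤ bSup f g T :=
  le_ciSup (bSup_bdd f g T) (⟨t, ht⟩ : Set.Icc (-T) T)

lemma bSup_le (f g : C(ℝ, X)) {T c : ℝ} (hT : 0 < T)
    (h : ∀ t ∈ Set.Icc (-T) T, dist (f t) (g t) ≤ c) : bSup f g T ≤ c := by
  haveI : Nonempty (Set.Icc (-T) T) := ⟨⟨0, by constructor <;> linarith⟩⟩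
  exact ciSup_le fun t => h t.1 t.2

lemma bSup_nonneg (f g : C(ℝ, X)) {T : ℝ} (hT : 0 < T) : 0 ≤ bSup f g T :=
  le_trans dist_nonneg (le_bSup f g ⟨by linarith, by linarith⟩ (t := 0))

lemma bFam_bdd (f g : C(ℝ, X)) :
    BddAbove (Set.range fun T : Set.Ioi (0 : ℝ) => min (bSup f g T.1) (1 / (T : ℝ))) := by
  refine ⟨max (bSup f g 1) 1, ?_⟩
  rintro x ⟨⟨T, hT⟩, rfl⟩
  simp only [Set.mem_Ioi] at hT
  rcases le_total T 1 with h1 | h1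
  · refine le_trans (min_le_left _ _) (le_trans ?_ (le_max_left _ _))
    exact bSup_le f g hT fun t ht => le_bSup f g ⟨by linarith [ht.1], by linarith [ht.2]⟩
  · refine le_trans (min_le_right _ _) (le_trans ?_ (le_max_right _ _))
    rw [div_le_one (by linarith)]
    exact h1

lemma min_le_bebutov (f g : C(ℝ, X)) {T : ℝ} (hT : 0 < T) :
    min (bSup f g T) (1 / T) ≤ bebutovDist f g := by
  rw [bebutov_eq]
  exact le_ciSup (bFam_bdd f g) (⟨T, hT⟩ : Set.Ioi (0:ℝ))

lemma bebutov_le (f g : C(ℝ, X)) {c : ℝ}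
    (h : ∀ T : ℝ, 0 < T → min (bSup f g T) (1 / T) ≤ c) : bebutovDist f g ≤ c := by
  rw [bebutov_eq]
  haveI : Nonempty (Set.Ioi (0 : ℝ)) := ⟨⟨1, by norm_num⟩⟩
  exact ciSup_le fun T => h T.1 T.2

lemma bebutov_nonneg (f g : C(ℝ, X)) : 0 ≤ bebutovDist f g :=
  le_trans (le_min (bSup_nonneg f g one_pos) (by norm_num)) (min_le_bebutov f g one_pos)

lemma bebutov_le_of_forall (f g : C(ℝ, X)) {c : ℝ} (hc : 0 ≤ c)
    (H : ∀ t : ℝ, dist (f t) (g t) ≤ c) : bebutovDist f g ≤ c :=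
  bebutov_le f g fun T hT => le_trans (min_le_left _ _) (bSup_le f g hT fun t _ => H t)

lemma bebutov_comm (f g : C(ℝ, X)) : bebutovDist f g = bebutovDist g f := by
  unfold bebutovDist
  simp_rw [dist_comm]

lemma bebutov_triangle (f g h : C(ℝ, X)) :
    bebutovDist f h ≤ bebutovDist f g + bebutovDist g h := by
  refine bebutov_le f h fun T hT => ?_
  have h1 : bSup f h T ≤ bSup f g T + bSup g h T :=
    bSup_le f h hT fun t ht =>
      (dist_triangle (f t) (g t) (h t)).trans (add_le_add (le_bSup f g ht) (le_bSup g h ht))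
  have hpos : 0 < 1 / T := by positivity
  have key : min (bSup f h T) (1 / T) ≤
      min (bSup f g T) (1 / T) + min (bSup g h T) (1 / T) := by
    rcases le_total (bSup f g T) (1 / T) with c1 | c1
    · rcases le_total (bSup g h T) (1 / T) with c2 | c2
      · rw [min_eq_left c1, min_eq_left c2]
        exact le_trans (min_le_left _ _) h1
      · rw [min_eq_left c1, min_eq_right c2]
        have := bSup_nonneg f g hT
        have := min_le_right (bSup f h T) (1 / T)
        linarith
    · rw [min_eq_right c1]
      have h0 : 0 ≤ min (bSup g h T) (1 / T) := le_min (bSup_nonneg g h hT) hpos.le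
      have := min_le_right (bSup f h T) (1 / T)
      linarith
  exact key.trans (add_le_add (min_le_bebutov f g hT) (min_le_bebutov g h hT))

lemma dist_zero_lt_of_bebutov_lt (f g : C(ℝ, X)) {ε : ℝ} (hε : 0 < ε)
    (hd : bebutovDist f g < ε) : dist (f 0) (g 0) < ε := by
  have hT : (0:ℝ) < 1 / ε := by positivity
  have hmin := min_le_bebutov f g hT
  rw [one_div_one_div] at hmin
  have hS : bSup f g (1 / ε) < ε := by
    by_contra hcon
    push_neg at hcon
    rw [min_eq_right hcon] at hmin
    linarith
  exact lt_of_le_of_lt (le_bSup f g ⟨by linarith, by linarith⟩ (t := 0)) hS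

end BebAux

namespace APAux

variable {Y : Type*} [MetricSpace Y]

/-- An almost periodic function is bounded. -/
lemma bound (ψ : C(ℝ, Y)) (hψ : BohrAlmostPeriodic ψ) :
    ∃ C : ℝ, ∀ x y : ℝ, dist (ψ x) (ψ y) ≤ C := by
  obtain ⟨l, hl, hAP⟩ := hψ 1 one_pos
  obtain ⟨C0, hC0⟩ : ∃ C0, ∀ z ∈ (fun x => dist (ψ x) (ψ 0)) '' Set.Icc (0:ℝ) l, z ≤ C0 := by
    obtain ⟨C0, hC0⟩ := IsCompact.bddAbove_image (isCompact_Icc (a := (0:ℝ)) (b := l))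
      ((ψ.continuous.dist continuous_const).continuousOn)
    exact ⟨C0, fun z hz => hC0 hz⟩
  have key : ∀ x : ℝ, dist (ψ x) (ψ 0) ≤ C0 + 1 := by
    intro x
    obtain ⟨τ, hτAP, hτmem⟩ := hAP (-x)
    have h1 : dist (ψ (x + τ)) (ψ x) < 1 := hτAP x
    have h2 : x + τ ∈ Set.Icc (0:ℝ) l := ⟨by linarith [hτmem.1], by linarith [hτmem.2]⟩
    have h3 : dist (ψ (x + τ)) (ψ 0) ≤ C0 := hC0 _ ⟨x + τ, h2, rfl⟩
    calc dist (ψ x) (ψ 0) ≤ dist (ψ x) (ψ (x + τ)) + dist (ψ (x + τ)) (ψ 0) :=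
          dist_triangle _ _ _
      _ ≤ 1 + C0 := by rw [dist_comm]; linarith
      _ = C0 + 1 := by ring
  refine ⟨2 * (C0 + 1), fun x y => ?_⟩
  calc dist (ψ x) (ψ y) ≤ dist (ψ x) (ψ 0) + dist (ψ 0) (ψ y) := dist_triangle _ _ _
    _ ≤ (C0 + 1) + (C0 + 1) := add_le_add (key x) (by rw [dist_comm]; exact key y)
    _ = 2 * (C0 + 1) := by ring

/-- An almost periodic function is uniformly continuous. -/
lemma unif_cont (ψ : C(ℝ, Y)) (hψ : BohrAlmostPeriodic ψ) :
    ∀ ε > (0:ℝ), ∃ δ > (0:ℝ), ∀ a b : ℝ, |a - b| ≤ δ → dist (ψ a) (ψ b) ≤ ε := by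
  intro ε hε
  obtain ⟨l, hl, hAP⟩ := hψ (ε / 3) (by linarith)
  have hUC : UniformContinuousOn ψ (Set.Icc (-1 : ℝ) (l + 1)) :=
    IsCompact.uniformContinuousOn_of_continuous isCompact_Icc ψ.continuous.continuousOn
  rw [Metric.uniformContinuousOn_iff] at hUC
  obtain ⟨δ', hδ', hδ'prop⟩ := hUC (ε / 3) (by linarith)
  refine ⟨min (δ' / 2) 1, by positivity, fun a b hab => ?_⟩
  obtain ⟨τ, hτAP, hτmem⟩ := hAP (-a)
  have hab1 : |a - b| ≤ 1 := hab.trans (min_le_right _ _)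
  have hab2 : |a - b| ≤ δ' / 2 := hab.trans (min_le_left _ _)
  have habs := abs_le.mp hab1
  have haτ : a + τ ∈ Set.Icc (-1 : ℝ) (l + 1) :=
    ⟨by linarith [hτmem.1], by linarith [hτmem.2]⟩
  have hbτ : b + τ ∈ Set.Icc (-1 : ℝ) (l + 1) :=
    ⟨by linarith [hτmem.1], by linarith [hτmem.2]⟩
  have hdmid : dist (ψ (a + τ)) (ψ (b + τ)) < ε / 3 := by
    apply hδ'prop _ haτ _ hbτ
    rw [Real.dist_eq]
    have : a + τ - (b + τ) = a - b := by ring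
    rw [this]
    linarith [abs_le.mp hab2]
  have h1 : dist (ψ (a + τ)) (ψ a) < ε / 3 := hτAP a
  have h2 : dist (ψ (b + τ)) (ψ b) < ε / 3 := hτAP b
  calc dist (ψ a) (ψ b) ≤ dist (ψ a) (ψ (a + τ)) + dist (ψ (a + τ)) (ψ (b + τ))
        + dist (ψ (b + τ)) (ψ b) := dist_triangle4 _ _ _ _
    _ ≤ ε / 3 + ε / 3 + ε / 3 := by
        rw [dist_comm (ψ a)]
        exact add_le_add (add_le_add h1.le hdmid.le) h2.le
    _ = ε := by ring

/-- The translation map into the bounded continuous functions. -/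
noncomputable def Psi (ψ : C(ℝ, Y)) {C : ℝ} (hC : ∀ x y : ℝ, dist (ψ x) (ψ y) ≤ C)
    (a : ℝ) : BoundedContinuousFunction ℝ Y :=
  BoundedContinuousFunction.mkOfBound (timeShift ψ a) C (fun x y => hC _ _)

variable {ψ : C(ℝ, Y)} {C : ℝ} {hC : ∀ x y : ℝ, dist (ψ x) (ψ y) ≤ C}

lemma Psi_apply (a x : ℝ) : Psi ψ hC a x = ψ (x + a) := rfl

lemma Psi_dist_le {a b ε : ℝ} (hε : 0 ≤ ε)
    (H : ∀ x : ℝ, dist (ψ (x + a)) (ψ (x + b)) ≤ ε) :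
    dist (Psi ψ hC a) (Psi ψ hC b) ≤ ε :=
  (BoundedContinuousFunction.dist_le hε).mpr H

lemma Psi_coe_dist (a b x : ℝ) :
    dist (ψ (x + a)) (ψ (x + b)) ≤ dist (Psi ψ hC a) (Psi ψ hC b) :=
  BoundedContinuousFunction.dist_coe_le_dist (f := Psi ψ hC a) (g := Psi ψ hC b) x

lemma Psi_shift_le (s a b : ℝ) :
    dist (Psi ψ hC (s + a)) (Psi ψ hC (s + b)) ≤ dist (Psi ψ hC a) (Psi ψ hC b) := by
  refine Psi_dist_le dist_nonneg fun x => ?_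
  have h := Psi_coe_dist (ψ := ψ) (hC := hC) a b (x + s)
  have e1 : x + (s + a) = x + s + a := by ring
  have e2 : x + (s + b) = x + s + b := by ring
  rw [e1, e2]
  exact h

lemma Psi_shift (s a b : ℝ) :
    dist (Psi ψ hC (s + a)) (Psi ψ hC (s + b)) = dist (Psi ψ hC a) (Psi ψ hC b) := by
  refine le_antisymm (Psi_shift_le s a b) ?_
  have h := Psi_shift_le (ψ := ψ) (hC := hC) (-s) (s + a) (s + b)
  have e1 : -s + (s + a) = a := by ring
  have e2 : -s + (s + b) = b := by ring
  rw [e1, e2] at h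
  exact h

lemma Psi_uc (hψ : BohrAlmostPeriodic ψ) :
    ∀ ε > (0:ℝ), ∃ δ > (0:ℝ), ∀ a b : ℝ, |a - b| ≤ δ →
      dist (Psi ψ hC a) (Psi ψ hC b) ≤ ε := by
  intro ε hε
  obtain ⟨δ, hδ, hδp⟩ := unif_cont ψ hψ ε hε
  refine ⟨δ, hδ, fun a b hab => Psi_dist_le hε.le fun x => hδp _ _ ?_⟩
  have : x + a - (x + b) = a - b := by ring
  rw [this]
  exact hab

lemma Psi_totallyBounded (hψ : BohrAlmostPeriodic ψ) :
    TotallyBounded (Set.range (Psi ψ hC)) := by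
  rw [Metric.totallyBounded_iff]
  intro ε hε
  obtain ⟨l, hl, hAP⟩ := hψ (ε / 3) (by linarith)
  -- the image of [0,l] under Psi is compact
  have hPsiCont : Continuous (Psi ψ hC) := by
    rw [Metric.continuous_iff]
    intro a ε' hε'
    obtain ⟨δ, hδ, hδp⟩ := Psi_uc (hC := hC) hψ (ε' / 2) (by linarith)
    refine ⟨δ, hδ, fun b hb => ?_⟩
    have := hδp b a (by rw [← Real.dist_eq]; exact hb.le)
    linarith
  have hK : IsCompact (Psi ψ hC '' Set.Icc (0:ℝ) l) :=
    (isCompact_Icc).image hPsiCont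
  obtain ⟨t, htfin, htcov⟩ := Metric.totallyBounded_iff.mp hK.totallyBounded (ε / 3)
    (by linarith)
  refine ⟨t, htfin, ?_⟩
  rintro x ⟨a, rfl⟩
  obtain ⟨τ, hτAP, hτmem⟩ := hAP (-a)
  have hc : a + τ ∈ Set.Icc (0:ℝ) l := ⟨by linarith [hτmem.1], by linarith [hτmem.2]⟩
  have hd1 : dist (Psi ψ hC a) (Psi ψ hC (a + τ)) ≤ ε / 3 := by
    refine Psi_dist_le (by linarith) fun x => ?_
    have := hτAP (x + a)
    rw [dist_comm]
    have e : x + a + τ = x + (a + τ) := by ring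
    rw [e] at this
    exact this.le
  have hmem : Psi ψ hC (a + τ) ∈ Psi ψ hC '' Set.Icc (0:ℝ) l := ⟨a + τ, hc, rfl⟩
  obtain ⟨y, hy, hyball⟩ := Set.mem_iUnion₂.mp (htcov hmem)
  refine Set.mem_iUnion₂.mpr ⟨y, hy, ?_⟩
  rw [Metric.mem_ball] at hyball ⊢
  calc dist (Psi ψ hC a) y ≤ dist (Psi ψ hC a) (Psi ψ hC (a + τ)) + dist (Psi ψ hC (a + τ)) y :=
        dist_triangle _ _ _
    _ < ε / 3 + ε / 3 := by linarith
    _ ≤ ε := by linarith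

/-- Every sequence of translates has a subsequence converging in the sup metric. -/
lemma extraction [CompleteSpace Y] (hψ : BohrAlmostPeriodic ψ) (u : ℕ → ℝ) :
    ∃ q : ℕ → ℕ, StrictMono q ∧ ∃ g : BoundedContinuousFunction ℝ Y,
      Tendsto (fun n => Psi ψ hC (u (q n))) atTop (𝓝 g) := by
  have hK : IsCompact (closure (Set.range (Psi ψ hC))) :=
    TotallyBounded.isCompact_of_isClosed (Psi_totallyBounded (hC := hC) hψ).closure
      isClosed_closure
  obtain ⟨g, -, q, hq, hconv⟩ := hK.tendsto_subseq
    (fun n => subset_closure (Set.mem_range_self (u n)))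
  exact ⟨q, hq, g, hconv⟩

end APAux

namespace SeqAux

/-- If the set of `ε₀`-almost periods is not relatively dense, there is a sequence whose
pairwise differences are never `ε₀`-almost periods. -/
lemma seq_construction {X : Type*} [MetricSpace X] (φ : C(ℝ, X)) {ε0 : ℝ}
    (hnot : ∀ l > (0:ℝ), ∃ a : ℝ, ∀ τ : ℝ, IsAlmostPeriod φ ε0 τ →
      τ ∉ Set.Icc a (a + l)) :
    ∃ hs : ℕ → ℝ, ∀ m n : ℕ, m < n → ¬ IsAlmostPeriod φ ε0 (hs n - hs m) := by
  have hsel : ∀ M : ℝ, ∃ a : ℝ, ∀ τ : ℝ, IsAlmostPeriod φ ε0 τ →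
      τ ∉ Set.Icc a (a + (2 * |M| + 2)) := fun M => hnot _ (by positivity)
  set sel : ℝ → ℝ := fun M => (hsel M).choose with hseldef
  have hsel' : ∀ M τ, IsAlmostPeriod φ ε0 τ →
      τ ∉ Set.Icc (sel M) (sel M + (2 * |M| + 2)) := fun M => (hsel M).choose_spec
  set f : ℕ → ℝ × ℝ := fun n => Nat.rec (motive := fun _ => ℝ × ℝ) ((0:ℝ), (0:ℝ))
    (fun _ p => (sel p.2 + |p.2| + 1, max p.2 |sel p.2 + |p.2| + 1|)) n with hf
  have hstep : ∀ n : ℕ,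
      f (n + 1) = (sel (f n).2 + |(f n).2| + 1, max (f n).2 |sel (f n).2 + |(f n).2| + 1|) :=
    fun n => rfl
  have hMmono : Monotone fun n => (f n).2 := by
    apply monotone_nat_of_le_succ
    intro n
    rw [hstep n]
    exact le_max_left _ _
  have hhM : ∀ n : ℕ, |(f n).1| ≤ (f n).2 := by
    intro n
    cases n with
    | zero => simp [hf]
    | succ n => rw [hstep n]; exact le_max_right _ _
  refine ⟨fun n => (f n).1, ?_⟩
  intro m n hmn hAP
  obtain ⟨n', rfl⟩ : ∃ n', n = n' + 1 := ⟨n - 1, by omega⟩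
  have hm : m ≤ n' := by omega
  apply hsel' (f n').2 _ hAP
  have h1 : |(f m).1| ≤ |(f n').2| :=
    le_trans (hhM m) (le_trans (hMmono hm) (le_abs_self _))
  have h2 := abs_le.mp h1
  simp only [hstep n', Set.mem_Icc]
  constructor <;> linarith [h2.1, h2.2]

end SeqAux


/-- If `φ` is uniformly comparable by character of recurrence with `ψ` (`𝔐_ψ ⊆ 𝔐_φ`)
and `ψ` is Bohr almost periodic, then so is `φ`. -/
theorem bohrAlmostPeriodic_of_uniformly_comparable
    {X Y : Type*} [MetricSpace X] [CompleteSpace X] [MetricSpace Y] [CompleteSpace Y]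
    (φ : C(ℝ, X)) (ψ : C(ℝ, Y)) (h : MClass ψ ⊆ MClass φ)
    (hψ : BohrAlmostPeriodic ψ) : BohrAlmostPeriodic φ := by
  by_contra hcon
  unfold BohrAlmostPeriodic at hcon
  push_neg at hcon
  obtain ⟨ε0, hε0, hnotRD⟩ := hcon
  unfold RelativelyDense at hnotRD
  push_neg at hnotRD
  simp only [Set.mem_setOf_eq] at hnotRD
  obtain ⟨hs, hP⟩ := SeqAux.seq_construction φ hnotRD
  obtain ⟨C, hC⟩ := APAux.bound ψ hψ
  -- first extraction: translates along hs converge in the sup metric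
  obtain ⟨k, hk, g1, hg1⟩ := APAux.extraction (hC := hC) hψ hs
  -- choose the witness points where the differences fail to be almost periods
  have hnotAP : ∀ i : ℕ, ∃ t : ℝ,
      ε0 ≤ dist (φ (t + (hs (k (i + 1)) - hs (k i)))) (φ t) := by
    intro i
    have hne := hP (k i) (k (i + 1)) (hk (Nat.lt_succ_self i))
    unfold IsAlmostPeriod at hne
    push_neg at hne
    exact hne
  choose u hu using hnotAP
  set τ : ℕ → ℝ := fun i => hs (k (i + 1)) - hs (k i) with hτdef
  -- second extraction: translates along u converge in the sup metric
  obtain ⟨q, hq, g2, hg2⟩ := APAux.extraction (hC := hC) hψ u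
  -- the interleaved sequence
  set w : ℕ → ℝ := fun j => if j % 2 = 0 then u (q (j / 2)) else u (q (j / 2)) + τ (q (j / 2))
    with hwdef
  -- shift invariance: the gap between the interleaved pairs
  have hgapPsi : ∀ i : ℕ, dist (APAux.Psi ψ hC (u i + τ i)) (APAux.Psi ψ hC (u i)) =
      dist (APAux.Psi ψ hC (hs (k (i + 1)))) (APAux.Psi ψ hC (hs (k i))) := by
    intro i
    have h3 := APAux.Psi_shift (ψ := ψ) (hC := hC) (u i - hs (k i)) (hs (k (i + 1))) (hs (k i))
    have e1 : u i - hs (k i) + hs (k (i + 1)) = u i + τ i := by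
      simp only [hτdef]; ring
    have e2 : u i - hs (k i) + hs (k i) = u i := by ring
    rw [e1, e2] at h3
    exact h3
  -- consecutive translates along hs ∘ k get close
  have hF : Tendsto (fun m => dist (APAux.Psi ψ hC (hs (k (m + 1))))
      (APAux.Psi ψ hC (hs (k m)))) atTop (𝓝 0) := by
    have h1 : Tendsto (fun m => APAux.Psi ψ hC (hs (k (m + 1)))) atTop (𝓝 g1) :=
      hg1.comp (tendsto_add_atTop_nat 1)
    have h2 := h1.dist hg1
    simpa using h2
  have he2 : Tendsto (fun i => dist (APAux.Psi ψ hC (u (q i))) g2) atTop (𝓝 0) := by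
    have h2 := hg2.dist (tendsto_const_nhds (x := g2) (f := atTop))
    simpa using h2
  set E : ℕ → ℝ := fun i => dist (APAux.Psi ψ hC (u (q i))) g2 +
    dist (APAux.Psi ψ hC (hs (k (q i + 1)))) (APAux.Psi ψ hC (hs (k (q i)))) with hEdef
  have hEtend : Tendsto E atTop (𝓝 0) := by
    have h2 := hF.comp hq.tendsto_atTop
    have h3 := he2.add h2
    simpa using h3
  have hwbound : ∀ j : ℕ, dist (APAux.Psi ψ hC (w j)) g2 ≤ E (j / 2) := by
    intro j
    by_cases hj : j % 2 = 0
    · have hwj : w j = u (q (j / 2)) := by simp only [hwdef, if_pos hj]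
      rw [hwj]
      have := dist_nonneg (x := APAux.Psi ψ hC (hs (k (q (j / 2) + 1))))
        (y := APAux.Psi ψ hC (hs (k (q (j / 2)))))
      simp only [hEdef]
      linarith
    · have hwj : w j = u (q (j / 2)) + τ (q (j / 2)) := by simp only [hwdef, if_neg hj]
      rw [hwj]
      have htri := dist_triangle (APAux.Psi ψ hC (u (q (j / 2)) + τ (q (j / 2))))
        (APAux.Psi ψ hC (u (q (j / 2)))) g2
      have hgp := hgapPsi (q (j / 2))
      simp only [hEdef]
      linarith
  have hdiv : Tendsto (fun j : ℕ => j / 2) atTop atTop := by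
    apply tendsto_atTop_atTop.mpr
    intro b
    exact ⟨2 * b, fun n hn => by omega⟩
  have hwtend0 : Tendsto (fun j => dist (APAux.Psi ψ hC (w j)) g2) atTop (𝓝 0) :=
    squeeze_zero (fun j => dist_nonneg) hwbound (hEtend.comp hdiv)
  -- w belongs to MClass ψ
  have hwM : w ∈ MClass ψ := by
    refine ⟨⟨g2, g2.continuous⟩, ?_⟩
    refine squeeze_zero (fun j => BebAux.bebutov_nonneg _ _) (fun j => ?_) hwtend0
    refine BebAux.bebutov_le_of_forall _ _ dist_nonneg fun x => ?_
    exact BoundedContinuousFunction.dist_coe_le_dist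
      (f := APAux.Psi ψ hC (w j)) (g := g2) x
  obtain ⟨χ, hχ⟩ := h hwM
  -- the gap for φ tends to zero by the triangle inequality
  have h2i1 : Tendsto (fun i : ℕ => 2 * i + 1) atTop atTop := by
    apply tendsto_atTop_atTop.mpr
    intro b
    exact ⟨b, fun n hn => by omega⟩
  have h2i : Tendsto (fun i : ℕ => 2 * i) atTop atTop := by
    apply tendsto_atTop_atTop.mpr
    intro b
    exact ⟨b, fun n hn => by omega⟩
  have hgapφ : Tendsto (fun i => bebutovDist (timeShift φ (w (2 * i + 1)))
      (timeShift φ (w (2 * i)))) atTop (𝓝 0) := by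
    refine squeeze_zero (g := fun i => bebutovDist (timeShift φ (w (2 * i + 1))) χ +
        bebutovDist (timeShift φ (w (2 * i))) χ)
      (fun i => BebAux.bebutov_nonneg _ _) (fun i => ?_) ?_
    · exact (BebAux.bebutov_triangle (timeShift φ (w (2 * i + 1))) χ
        (timeShift φ (w (2 * i)))).trans (le_of_eq (by
          rw [BebAux.bebutov_comm χ (timeShift φ (w (2 * i)))]))
    · have h3 := (hχ.comp h2i1).add (hχ.comp h2i)
      simpa using h3
  have hev : ∀ᶠ i in atTop, bebutovDist (timeShift φ (w (2 * i + 1)))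
      (timeShift φ (w (2 * i))) < ε0 := by
    exact hgapφ.eventually (gt_mem_nhds hε0)
  obtain ⟨i, hi⟩ := hev.exists
  have hpt := BebAux.dist_zero_lt_of_bebutov_lt _ _ hε0 hi
  -- identify the two points
  have hm1 : (2 * i + 1) % 2 ≠ 0 := by omega
  have hd1 : (2 * i + 1) / 2 = i := by omega
  have hm0 : (2 * i) % 2 = 0 := by omega
  have hd0 : (2 * i) / 2 = i := by omega
  have ew1 : w (2 * i + 1) = u (q i) + τ (q i) := by
    simp only [hwdef, if_neg hm1, hd1]
  have ew0 : w (2 * i) = u (q i) := by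
    simp only [hwdef, if_pos hm0, hd0]
  have hpt' : dist (φ (u (q i) + τ (q i))) (φ (u (q i))) < ε0 := by
    have e1 : timeShift φ (w (2 * i + 1)) 0 = φ (u (q i) + τ (q i)) := by
      show φ (0 + w (2 * i + 1)) = _
      rw [ew1, zero_add]
    have e2 : timeShift φ (w (2 * i)) 0 = φ (u (q i)) := by
      show φ (0 + w (2 * i)) = _
      rw [ew0, zero_add]
    rw [e1, e2] at hpt
    exact hpt
  have hge := hu (q i)
  simp only [hτdef] at hpt'
  linarith
end

section
/- Let φ ∈ C(ℝ,X) be uniformly comparable by character of recurrence with ψ ∈ C(ℝ,Y). If ψ is Lagrange stable, then φ is Lagrange stable. -/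
open Filter Topology

/-- If `φ` is uniformly comparable by character of recurrence with `ψ` (`𝔐_ψ ⊆ 𝔐_φ`)
and `ψ` is Lagrange stable, then so is `φ`. -/
theorem lagrangeStable_of_uniformly_comparable
    {X Y : Type*} [MetricSpace X] [CompleteSpace X] [MetricSpace Y] [CompleteSpace Y]
    (φ : C(ℝ, X)) (ψ : C(ℝ, Y)) (h : MClass ψ ⊆ MClass φ)
    (hψ : LagrangeStable ψ) : LagrangeStable φ := by
  intro t
  obtain ⟨k, χ, hk, hconv⟩ := hψ t
  obtain ⟨ψ', hψ'⟩ := h (⟨χ, hconv⟩ : (fun n => t (k n)) ∈ MClass ψ)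
  exact ⟨k, ψ', hk, hψ'⟩
end

section
/- Let φ ∈ C(ℝ,X) be uniformly comparable by character of recurrence with ψ ∈ C(ℝ,Y), and let ψ be Lagrange stable. If ψ is pseudo-periodic, then φ is pseudo-periodic. -/
open Filter Topology

namespace BebutovAux

variable {X : Type*} [MetricSpace X]

/-- Inner sup in Bebutov's metric. -/
noncomputable def innSup (f g : C(ℝ, X)) (T : ℝ) : ℝ :=
  ⨆ t : Set.Icc (-T) T, dist (f t.1) (g t.1)

lemma bebutovDist_eq (f g : C(ℝ, X)) :
    bebutovDist f g = ⨆ T : Set.Ioi (0:ℝ), min (innSup f g (T : ℝ)) (1/(T:ℝ)) := rfl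

lemma innBdd (f g : C(ℝ, X)) (T : ℝ) :
    BddAbove (Set.range fun t : Set.Icc (-T) T => dist (f t.1) (g t.1)) := by
  have h1 : IsCompact ((fun t => dist (f t) (g t)) '' Set.Icc (-T) T) :=
    isCompact_Icc.image (f.continuous.dist g.continuous)
  rw [Set.image_eq_range] at h1
  exact h1.bddAbove

lemma dist_le_innSup (f g : C(ℝ, X)) {T t : ℝ} (ht : t ∈ Set.Icc (-T) T) :
    dist (f t) (g t) ≤ innSup f g T :=
  le_ciSup (innBdd f g T) ⟨t, ht⟩

lemma inn_nonneg (f g : C(ℝ, X)) {T : ℝ} (hT : 0 < T) : 0 ≤ innSup f g T :=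
  dist_nonneg.trans (dist_le_innSup f g ⟨by linarith, hT.le⟩)

lemma innSup_le (f g : C(ℝ, X)) {T c : ℝ} (hT : 0 < T)
    (h : ∀ t ∈ Set.Icc (-T) T, dist (f t) (g t) ≤ c) : innSup f g T ≤ c := by
  haveI : Nonempty (Set.Icc (-T) T) := (Set.nonempty_Icc.2 (by linarith)).to_subtype
  exact ciSup_le fun t => h t.1 t.2

lemma outBdd (f g : C(ℝ, X)) :
    BddAbove (Set.range fun T : Set.Ioi (0:ℝ) => min (innSup f g (T : ℝ)) (1/(T:ℝ))) := by
  refine ⟨innSup f g 1 + 1, ?_⟩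
  rintro x ⟨T, rfl⟩
  have hT : (0:ℝ) < (T : ℝ) := T.2
  by_cases hT1 : (T:ℝ) ≤ 1
  · have h1 : innSup f g (T : ℝ) ≤ innSup f g 1 := by
      refine innSup_le f g hT fun t ht => ?_
      exact dist_le_innSup f g ⟨by linarith [ht.1], by linarith [ht.2]⟩
    calc min (innSup f g (T : ℝ)) (1/(T:ℝ)) ≤ innSup f g (T : ℝ) := min_le_left _ _
      _ ≤ innSup f g 1 := h1
      _ ≤ innSup f g 1 + 1 := by linarith
  · have h2 : 1/(T:ℝ) ≤ 1 := by
      rw [div_le_one hT]; linarith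
    calc min (innSup f g (T : ℝ)) (1/(T:ℝ)) ≤ 1/(T:ℝ) := min_le_right _ _
      _ ≤ 1 := h2
      _ ≤ innSup f g 1 + 1 := by linarith [inn_nonneg f g one_pos]

lemma nonneg (f g : C(ℝ, X)) : 0 ≤ bebutovDist f g := by
  rw [bebutovDist_eq]
  have h1 : min (innSup f g ((⟨1, by norm_num⟩ : Set.Ioi (0:ℝ)) : ℝ))
      (1/((⟨1, by norm_num⟩ : Set.Ioi (0:ℝ)) : ℝ)) ≤
      ⨆ T : Set.Ioi (0:ℝ), min (innSup f g (T : ℝ)) (1/(T:ℝ)) :=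
    le_ciSup (outBdd f g) ⟨1, by norm_num⟩
  have h0 : (0:ℝ) ≤ min (innSup f g 1) (1/(1:ℝ)) :=
    le_min (inn_nonneg f g one_pos) (by norm_num)
  calc (0:ℝ) ≤ min (innSup f g 1) (1/(1:ℝ)) := h0
    _ ≤ _ := h1

lemma dist_le (f g : C(ℝ, X)) {c : ℝ} (hc : 0 ≤ c)
    (h : ∀ t : ℝ, dist (f t) (g t) ≤ c) : bebutovDist f g ≤ c := by
  rw [bebutovDist_eq]
  refine Real.iSup_le (fun T => ?_) hc
  have hT : (0:ℝ) < (T : ℝ) := T.2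
  exact (min_le_left _ _).trans (innSup_le f g hT fun t _ => h t)

lemma dist_zero_lt (f g : C(ℝ, X)) {ε : ℝ} (hε : 0 < ε)
    (h : bebutovDist f g < ε) : dist (f 0) (g 0) < ε := by
  rw [bebutovDist_eq] at h
  have hTpos : (0:ℝ) < 1/ε := by positivity
  have h1 : min (innSup f g (1/ε)) (1/(1/ε)) ≤
      ⨆ T : Set.Ioi (0:ℝ), min (innSup f g (T : ℝ)) (1/(T:ℝ)) :=
    le_ciSup (outBdd f g) ⟨1/ε, hTpos⟩
  have h2 : 1/(1/ε) = ε := one_div_one_div ε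
  rw [h2] at h1
  have h3 : min (innSup f g (1/ε)) ε < ε := lt_of_le_of_lt h1 h
  have h4 : innSup f g (1/ε) < ε := by
    by_contra hcon
    push_neg at hcon
    rw [min_eq_right hcon] at h3
    exact lt_irrefl _ h3
  exact lt_of_le_of_lt (dist_le_innSup f g ⟨by linarith, hTpos.le⟩) h4

lemma symm (f g : C(ℝ, X)) : bebutovDist f g = bebutovDist g f := by
  rw [bebutovDist_eq, bebutovDist_eq]
  exact iSup_congr fun T => by
    rw [show innSup f g (T:ℝ) = innSup g f (T:ℝ) from
      iSup_congr fun t => dist_comm (f t.1) (g t.1)]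

lemma triangle (f g h : C(ℝ, X)) :
    bebutovDist f h ≤ bebutovDist f g + bebutovDist g h := by
  rw [bebutovDist_eq f h]
  refine Real.iSup_le (fun T => ?_) (add_nonneg (nonneg f g) (nonneg g h))
  have hT : (0:ℝ) < (T : ℝ) := T.2
  have hA : innSup f h (T:ℝ) ≤ innSup f g (T:ℝ) + innSup g h (T:ℝ) :=
    innSup_le f h hT fun t ht => (dist_triangle (f t) (g t) (h t)).trans
      (add_le_add (dist_le_innSup f g ht) (dist_le_innSup g h ht))
  have hfg : min (innSup f g (T:ℝ)) (1/(T:ℝ)) ≤ bebutovDist f g := by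
    rw [bebutovDist_eq]; exact le_ciSup (outBdd f g) T
  have hgh : min (innSup g h (T:ℝ)) (1/(T:ℝ)) ≤ bebutovDist g h := by
    rw [bebutovDist_eq]; exact le_ciSup (outBdd g h) T
  have hkey : min (innSup f h (T:ℝ)) (1/(T:ℝ)) ≤
      min (innSup f g (T:ℝ)) (1/(T:ℝ)) + min (innSup g h (T:ℝ)) (1/(T:ℝ)) := by
    by_cases h1 : innSup f g (T:ℝ) ≤ 1/(T:ℝ)
    · by_cases h2 : innSup g h (T:ℝ) ≤ 1/(T:ℝ)
      · rw [min_eq_left h1, min_eq_left h2]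
        exact (min_le_left _ _).trans hA
      · have e2 : min (innSup g h (T:ℝ)) (1/(T:ℝ)) = 1/(T:ℝ) :=
          min_eq_right (le_of_not_ge h2)
        have n1 : (0:ℝ) ≤ min (innSup f g (T:ℝ)) (1/(T:ℝ)) :=
          le_min (inn_nonneg f g hT) (by positivity)
        have := min_le_right (innSup f h (T:ℝ)) (1/(T:ℝ))
        linarith
    · have e1 : min (innSup f g (T:ℝ)) (1/(T:ℝ)) = 1/(T:ℝ) :=
        min_eq_right (le_of_not_ge h1)
      have n2 : (0:ℝ) ≤ min (innSup g h (T:ℝ)) (1/(T:ℝ)) :=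
        le_min (inn_nonneg g h hT) (by positivity)
      have := min_le_right (innSup f h (T:ℝ)) (1/(T:ℝ))
      linarith
  linarith

/-- Key uniformity lemma: if `𝔐_ψ ⊆ 𝔐_φ`, `ψ` is Lagrange stable and `τ n` is a
`1/(n+1)`-almost period of `ψ`, then the shifts by `τ n` of `φ` converge to `φ`
uniformly with respect to the additional shift `s`. -/
lemma key {X Y : Type*} [MetricSpace X] [MetricSpace Y]
    (φ : C(ℝ, X)) (ψ : C(ℝ, Y)) (h : MClass ψ ⊆ MClass φ) (hL : LagrangeStable ψ)
    (τ : ℕ → ℝ) (hτ : ∀ n : ℕ, IsAlmostPeriod ψ (1/((n:ℝ)+1)) (τ n))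
    {ε : ℝ} (hε : 0 < ε) :
    ∃ N : ℕ, ∀ n ≥ N, ∀ s : ℝ,
      bebutovDist (timeShift φ (s + τ n)) (timeShift φ s) < ε := by
  by_contra hcon
  push_neg at hcon
  choose n hn s hs using hcon
  obtain ⟨k, η, hk, hη⟩ := hL s
  set a : ℕ → ℝ := fun m => s (k m) with ha
  set b : ℕ → ℝ := fun m => s (k m) + τ (n (k m)) with hb
  have hnk : ∀ m : ℕ, m ≤ n (k m) := fun m => (hk.le_apply).trans (hn (k m))
  have hba : ∀ m : ℕ, bebutovDist (timeShift ψ (b m)) (timeShift ψ (a m)) ≤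
      1/((m:ℝ)+1) := by
    intro m
    refine dist_le _ _ (by positivity) fun t => ?_
    have h1 := hτ (n (k m)) (t + a m)
    have he : t + b m = (t + a m) + τ (n (k m)) := by simp [ha, hb]; ring
    have h2 : dist (ψ (t + b m)) (ψ (t + a m)) < 1/((n (k m) : ℝ)+1) := by
      rw [he]; exact h1
    have h3 : 1/((n (k m) : ℝ)+1) ≤ 1/((m:ℝ)+1) := by
      apply one_div_le_one_div_of_le (by positivity)
      have := hnk m
      have : (m : ℝ) ≤ (n (k m) : ℝ) := Nat.cast_le.mpr this
      linarith
    have h4 : dist (timeShift ψ (b m) t) (timeShift ψ (a m) t) =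
        dist (ψ (t + b m)) (ψ (t + a m)) := rfl
    rw [h4]
    exact h2.le.trans h3
  have haη : Tendsto (fun m => bebutovDist (timeShift ψ (a m)) η) atTop (𝓝 0) := hη
  have hbψ : Tendsto (fun m => bebutovDist (timeShift ψ (b m)) (timeShift ψ (a m)))
      atTop (𝓝 0) :=
    squeeze_zero (fun m => nonneg _ _) hba tendsto_one_div_add_atTop_nhds_zero_nat
  have hbη : Tendsto (fun m => bebutovDist (timeShift ψ (b m)) η) atTop (𝓝 0) := by
    refine squeeze_zero (fun m => nonneg _ _) (fun m => triangle _ (timeShift ψ (a m)) _)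
      ?_
    simpa using hbψ.add haη
  set u : ℕ → ℝ := fun m => if Even m then a (m/2) else b (m/2) with hu
  have he : ∀ m : ℕ, u (2 * m) = a m := by
    intro m
    simp only [hu]
    rw [if_pos (even_two_mul m)]
    congr 1
    omega
  have ho : ∀ m : ℕ, u (2 * m + 1) = b m := by
    intro m
    simp only [hu]
    rw [if_neg (Nat.not_even_iff_odd.mpr ⟨m, rfl⟩)]
    congr 1
    omega
  have huη : Tendsto (fun m => bebutovDist (timeShift ψ (u m)) η) atTop (𝓝 0) := by
    rw [Metric.tendsto_atTop] at haη hbη ⊢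
    intro δ hδ
    obtain ⟨N1, h1⟩ := haη δ hδ
    obtain ⟨N2, h2⟩ := hbη δ hδ
    refine ⟨2 * (N1 + N2), fun m hm => ?_⟩
    by_cases hpar : Even m
    · have hh := h1 (m/2) (by omega)
      simpa [hu, hpar] using hh
    · have hh := h2 (m/2) (by omega)
      simpa [hu, hpar] using hh
  obtain ⟨χ, hχ⟩ := h (⟨η, huη⟩ : u ∈ MClass ψ)
  have h2m : Tendsto (fun m : ℕ => 2 * m) atTop atTop :=
    tendsto_atTop_mono (fun m => (by omega : m ≤ 2 * m)) tendsto_id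
  have h2m1 : Tendsto (fun m : ℕ => 2 * m + 1) atTop atTop :=
    tendsto_atTop_mono (fun m => (by omega : m ≤ 2 * m + 1)) tendsto_id
  have haχ : Tendsto (fun m => bebutovDist (timeShift φ (a m)) χ) atTop (𝓝 0) := by
    refine (hχ.comp h2m).congr fun m => ?_
    simp only [Function.comp]
    rw [he m]
  have hbχ : Tendsto (fun m => bebutovDist (timeShift φ (b m)) χ) atTop (𝓝 0) := by
    refine (hχ.comp h2m1).congr fun m => ?_
    simp only [Function.comp]
    rw [ho m]
  have final : Tendsto (fun m => bebutovDist (timeShift φ (b m)) (timeShift φ (a m)))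
      atTop (𝓝 0) := by
    refine squeeze_zero (fun m => nonneg _ _) (fun m => ?_) (by simpa using hbχ.add haχ)
    have ht := triangle (timeShift φ (b m)) χ (timeShift φ (a m))
    rwa [symm χ (timeShift φ (a m))] at ht
  rw [Metric.tendsto_atTop] at final
  obtain ⟨M, hM⟩ := final ε hε
  have h1 := hM M le_rfl
  rw [Real.dist_eq, sub_zero, abs_of_nonneg (nonneg _ _)] at h1
  exact absurd (hs (k M)) (not_le.mpr h1)

end BebutovAux

/-- If `φ` is uniformly comparable by character of recurrence with `ψ` (`𝔐_ψ ⊆ 𝔐_φ`),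
`ψ` is Lagrange stable and pseudo-periodic, then `φ` is pseudo-periodic. -/

theorem pseudoPeriodic_of_uniformly_comparable
    {X Y : Type*} [MetricSpace X] [CompleteSpace X] [MetricSpace Y] [CompleteSpace Y]
    (φ : C(ℝ, X)) (ψ : C(ℝ, Y)) (h : MClass ψ ⊆ MClass φ)
    (hL : LagrangeStable ψ) (hψ : PseudoPeriodic ψ) : PseudoPeriodic φ := by
  intro ε hε l hl
  constructor
  · have hchoice : ∀ n : ℕ, ∃ τ : ℝ, l < τ ∧ IsAlmostPeriod ψ (1/((n:ℝ)+1)) τ :=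
      fun n => (hψ (1/((n:ℝ)+1)) (by positivity) l hl).1
    choose τ hτl hτ using hchoice
    obtain ⟨N, hN⟩ := BebutovAux.key φ ψ h hL τ hτ hε
    refine ⟨τ N, hτl N, fun t => ?_⟩
    have h1 := hN N le_rfl t
    have h0 := BebutovAux.dist_zero_lt _ _ hε h1
    simpa [timeShift] using h0
  · have hchoice : ∀ n : ℕ, ∃ τ : ℝ, τ < -l ∧ IsAlmostPeriod ψ (1/((n:ℝ)+1)) τ :=
      fun n => (hψ (1/((n:ℝ)+1)) (by positivity) l hl).2
    choose τ hτl hτ using hchoice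
    obtain ⟨N, hN⟩ := BebutovAux.key φ ψ h hL τ hτ hε
    refine ⟨τ N, hτl N, fun t => ?_⟩
    have h1 := hN N le_rfl t
    have h0 := BebutovAux.dist_zero_lt _ _ hε h1
    simpa [timeShift] using h0
end

section
/- If 𝔐^u_ψ ⊆ 𝔐^u_φ for φ ∈ C(ℝ,X) and ψ ∈ C(ℝ,Y), then 𝔑^u_ψ ⊆ 𝔑^u_φ. -/
open Filter Topology

section Aux

variable {X : Type*} [MetricSpace X]

lemma inner_bdd (φ ψ : C(ℝ, X)) (T : ℝ) :
    BddAbove (Set.range fun t : Set.Icc (-T) T => dist (φ t.1) (ψ t.1)) := by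
  have him : BddAbove ((fun u => dist (φ u) (ψ u)) '' Set.Icc (-T) T) :=
    isCompact_Icc.bddAbove_image ((φ.continuous.dist ψ.continuous).continuousOn)
  rwa [Set.image_eq_range] at him

lemma bebutov_nonneg (φ ψ : C(ℝ, X)) : 0 ≤ bebutovDist φ ψ :=
  Real.iSup_nonneg fun T => le_min (Real.iSup_nonneg fun _ => dist_nonneg)
    (le_of_lt (by have hT : (0:ℝ) < T := T.2; positivity))

lemma bebutov_bddAbove (φ ψ : C(ℝ, X)) :
    BddAbove (Set.range fun T : Set.Ioi (0:ℝ) =>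
      min (⨆ t : Set.Icc (-(T:ℝ)) (T:ℝ), dist (φ t.1) (ψ t.1)) (1 / (T:ℝ))) := by
  refine ⟨max (⨆ t : Set.Icc (-(1:ℝ)) 1, dist (φ t.1) (ψ t.1)) 1, ?_⟩
  rintro x ⟨T, rfl⟩
  have hT0 : (0:ℝ) < T := T.2
  rcases le_total (T:ℝ) 1 with hT | hT
  · refine le_max_of_le_left ((min_le_left _ _).trans ?_)
    have hne : Nonempty (Set.Icc (-(T:ℝ)) (T:ℝ)) := ⟨⟨0, by constructor <;> linarith⟩⟩
    refine ciSup_le fun t => ?_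
    exact le_ciSup (inner_bdd φ ψ 1)
      (⟨t.1, by have h1 := t.2.1; have h2 := t.2.2; constructor <;> linarith⟩ :
        Set.Icc (-(1:ℝ)) 1)
  · exact le_max_of_le_right ((min_le_right _ _).trans ((div_le_one hT0).mpr hT))

lemma bebutov_self (φ : C(ℝ, X)) : bebutovDist φ φ = 0 := by
  haveI : Nonempty (Set.Ioi (0:ℝ)) := ⟨⟨1, Set.mem_Ioi.mpr one_pos⟩⟩
  unfold bebutovDist
  have key : ∀ T : Set.Ioi (0:ℝ),
      min (⨆ t : Set.Icc (-(T:ℝ)) (T:ℝ), dist (φ t.1) (φ t.1)) (1/(T:ℝ)) = 0 := by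
    intro T
    have hT0 : (0:ℝ) < T := T.2
    haveI : Nonempty (Set.Icc (-(T:ℝ)) (T:ℝ)) := ⟨⟨0, by constructor <;> linarith⟩⟩
    simp only [dist_self, ciSup_const]
    exact min_eq_left (by positivity)
  simp only [key, ciSup_const]

lemma bebutov_symm (φ ψ : C(ℝ, X)) : bebutovDist φ ψ = bebutovDist ψ φ := by
  unfold bebutovDist
  simp only [dist_comm]

lemma min_add_min {x y c : ℝ} (hx : 0 ≤ x) (hy : 0 ≤ y) (hc : 0 ≤ c) :
    min (x + y) c ≤ min x c + min y c := by
  rcases le_total x c with h | h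
  · rcases le_total y c with h' | h'
    · rw [min_eq_left h, min_eq_left h']; exact min_le_left _ _
    · rw [min_eq_right h']
      exact (min_le_right _ _).trans (by linarith [le_min hx hc])
  · rw [min_eq_right h]
    exact (min_le_right _ _).trans (by linarith [le_min hy hc])

lemma bebutov_triangle (φ ψ χ : C(ℝ, X)) :
    bebutovDist φ χ ≤ bebutovDist φ ψ + bebutovDist ψ χ := by
  haveI : Nonempty (Set.Ioi (0:ℝ)) := ⟨⟨1, Set.mem_Ioi.mpr one_pos⟩⟩
  show (⨆ T : Set.Ioi (0:ℝ),
      min (⨆ t : Set.Icc (-(T:ℝ)) (T:ℝ), dist (φ t.1) (χ t.1)) (1/(T:ℝ))) ≤ _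
  refine ciSup_le fun T => ?_
  have hT0 : (0:ℝ) < T := T.2
  haveI hne : Nonempty (Set.Icc (-(T:ℝ)) (T:ℝ)) := ⟨⟨0, by constructor <;> linarith⟩⟩
  have hA : (⨆ t : Set.Icc (-(T:ℝ)) (T:ℝ), dist (φ t.1) (χ t.1)) ≤
      (⨆ t : Set.Icc (-(T:ℝ)) (T:ℝ), dist (φ t.1) (ψ t.1)) +
      (⨆ t : Set.Icc (-(T:ℝ)) (T:ℝ), dist (ψ t.1) (χ t.1)) :=
    ciSup_le fun t => (dist_triangle _ (ψ t.1) _).trans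
      (add_le_add (le_ciSup (inner_bdd φ ψ T) t) (le_ciSup (inner_bdd ψ χ T) t))
  calc min (⨆ t : Set.Icc (-(T:ℝ)) (T:ℝ), dist (φ t.1) (χ t.1)) (1/(T:ℝ))
      ≤ min ((⨆ t : Set.Icc (-(T:ℝ)) (T:ℝ), dist (φ t.1) (ψ t.1)) +
          (⨆ t : Set.Icc (-(T:ℝ)) (T:ℝ), dist (ψ t.1) (χ t.1))) (1/(T:ℝ)) :=
        min_le_min hA le_rfl
    _ ≤ min (⨆ t : Set.Icc (-(T:ℝ)) (T:ℝ), dist (φ t.1) (ψ t.1)) (1/(T:ℝ)) +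
        min (⨆ t : Set.Icc (-(T:ℝ)) (T:ℝ), dist (ψ t.1) (χ t.1)) (1/(T:ℝ)) :=
        min_add_min (Real.iSup_nonneg fun _ => dist_nonneg)
          (Real.iSup_nonneg fun _ => dist_nonneg) (by positivity)
    _ ≤ bebutovDist φ ψ + bebutovDist ψ χ :=
        add_le_add (le_ciSup (bebutov_bddAbove φ ψ) T) (le_ciSup (bebutov_bddAbove ψ χ) T)

lemma timeShift_zero (φ : C(ℝ, X)) : timeShift φ 0 = φ := by
  ext t; simp [timeShift]

end Aux

/-- If `𝔐^u_ψ ⊆ 𝔐^u_φ`, then `𝔑^u_ψ ⊆ 𝔑^u_φ`. -/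
theorem MuClass_subset_imp_NuClass_subset
    {X Y : Type*} [MetricSpace X] [CompleteSpace X] [MetricSpace Y] [CompleteSpace Y]
    (φ : C(ℝ, X)) (ψ : C(ℝ, Y)) (h : MuClass ψ ⊆ MuClass φ) :
    NuClass ψ ⊆ NuClass φ := by
  intro t ht
  obtain ⟨htN, htU⟩ := ht
  replace htN : Tendsto (fun n => bebutovDist (timeShift ψ (t n)) ψ) atTop (𝓝 0) := htN
  set r : ℕ → ℝ := fun n => if Even n then t (n / 2) else 0 with hr
  have hrMu : r ∈ MuClass ψ := by
    constructor
    · refine ⟨ψ, ?_⟩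
      rw [Metric.tendsto_atTop] at htN ⊢
      intro ε hε
      obtain ⟨N, hN⟩ := htN ε hε
      refine ⟨2 * N, fun n hn => ?_⟩
      by_cases hev : Even n
      · obtain ⟨m, rfl⟩ := hev
        have hev' : Even (m + m) := ⟨m, rfl⟩
        have e1 : r (m + m) = t m := by
          simp only [hr, if_pos hev']; congr 1; omega
        rw [e1]; exact hN m (by omega)
      · have e2 : r n = 0 := by rw [hr]; exact if_neg hev
        rw [e2, timeShift_zero, bebutov_self]
        simpa using hε
    · refine ⟨fun s => timeShift ψ s, fun ε hε => ?_⟩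
      obtain ⟨N, hN⟩ := htU ε hε
      refine ⟨2 * N, fun n hn s => ?_⟩
      by_cases hev : Even n
      · obtain ⟨m, rfl⟩ := hev
        have hev' : Even (m + m) := ⟨m, rfl⟩
        have e1 : r (m + m) = t m := by
          simp only [hr, if_pos hev']; congr 1; omega
        rw [e1]; exact hN m (by omega) s
      · have e2 : r n = 0 := by rw [hr]; exact if_neg hev
        rw [e2, add_zero, bebutov_self]
        exact hε
  obtain ⟨-, Φ, hΦ⟩ := h hrMu
  have e1 : ∀ n : ℕ, r (2 * n) = t n := fun n => by
    have hev : Even (2 * n) := ⟨n, two_mul n⟩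
    simp only [hr, if_pos hev]; congr 1; omega
  have e2 : ∀ n : ℕ, r (2 * n + 1) = 0 := fun n => by
    have hodd : ¬ Even (2 * n + 1) := by rw [Nat.even_iff]; omega
    simp only [hr, if_neg hodd]
  constructor
  · -- t ∈ NClass φ
    show Tendsto (fun n => bebutovDist (timeShift φ (t n)) φ) atTop (𝓝 0)
    rw [Metric.tendsto_atTop]
    intro ε hε
    obtain ⟨N, hN⟩ := hΦ (ε / 2) (by linarith)
    refine ⟨N, fun n hn => ?_⟩
    have h1 := hN (2 * n) (by omega) 0
    have h2 := hN (2 * n + 1) (by omega) 0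
    rw [e1, zero_add] at h1
    rw [e2, add_zero, timeShift_zero] at h2
    have key : bebutovDist (timeShift φ (t n)) φ < ε := by
      calc bebutovDist (timeShift φ (t n)) φ
          ≤ bebutovDist (timeShift φ (t n)) (Φ 0) + bebutovDist (Φ 0) φ :=
            bebutov_triangle _ _ _
        _ < ε / 2 + ε / 2 := add_lt_add h1 (by rwa [bebutov_symm] at h2)
        _ = ε := by ring
    rw [Real.dist_eq, sub_zero, abs_of_nonneg (bebutov_nonneg _ _)]
    exact key
  · -- uniform condition for φ
    intro ε hε
    obtain ⟨N, hN⟩ := hΦ (ε / 2) (by linarith)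
    refine ⟨N, fun n hn s => ?_⟩
    have h1 := hN (2 * n) (by omega) s
    have h2 := hN (2 * n + 1) (by omega) s
    rw [e1] at h1
    rw [e2, add_zero] at h2
    calc bebutovDist (timeShift φ (s + t n)) (timeShift φ s)
        ≤ bebutovDist (timeShift φ (s + t n)) (Φ s) +
          bebutovDist (Φ s) (timeShift φ s) := bebutov_triangle _ _ _
      _ < ε / 2 + ε / 2 := add_lt_add h1 (by rwa [bebutov_symm] at h2)
      _ = ε := by ring
end

section
/- Let φ ∈ C(ℝ,X) and ψ ∈ C(ℝ,Y) satisfy 𝔐^u_ψ ⊆ 𝔐^u_φ. If ψ is Bohr almost periodic, then φ is Bohr almost periodic. -/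
open Filter Topology

section aux
variable {X : Type*} [MetricSpace X] (f g : C(ℝ, X))

lemma bddAbove_inner (T : ℝ) :
    BddAbove (Set.range fun t : Set.Icc (-T) T => dist (f t.1) (g t.1)) := by
  have h1 : Set.range (fun t : Set.Icc (-T) T => dist (f t.1) (g t.1))
      = (fun t => dist (f t) (g t)) '' Set.Icc (-T) T :=
    (Set.image_eq_range (fun t => dist (f t) (g t)) (Set.Icc (-T) T)).symm
  rw [h1]
  exact (isCompact_Icc.image (by continuity)).bddAbove

lemma inner_le (T C : ℝ) (hC : 0 ≤ C) (h : ∀ u ∈ Set.Icc (-T) T, dist (f u) (g u) ≤ C) :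
    (⨆ t : Set.Icc (-T) T, dist (f t.1) (g t.1)) ≤ C :=
  Real.iSup_le (fun t => h t.1 t.2) hC

lemma bddAbove_outer :
    BddAbove (Set.range fun T : Set.Ioi (0:ℝ) =>
      min (⨆ t : Set.Icc (-(T:ℝ)) (T:ℝ), dist (f t.1) (g t.1)) (1 / (T:ℝ))) := by
  obtain ⟨C₁, hC₁⟩ : ∃ C, ∀ u ∈ Set.Icc (-1:ℝ) 1, dist (f u) (g u) ≤ C := by
    obtain ⟨C, hC⟩ := (isCompact_Icc.image
      (show Continuous fun t => dist (f t) (g t) by continuity)).bddAbove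
    exact ⟨C, fun u hu => hC ⟨u, hu, rfl⟩⟩
  refine ⟨max (max C₁ 0) 1, ?_⟩
  rintro x ⟨T, rfl⟩
  rcases le_or_gt (T : ℝ) 1 with hT | hT
  · refine le_trans (min_le_left _ _) (le_trans ?_ (le_max_left _ _))
    refine inner_le f g _ (max C₁ 0) (le_max_right _ _) ?_
    intro u hu
    exact le_trans (hC₁ u ⟨by linarith [hu.1, neg_le_neg hT], by linarith [hu.2]⟩) (le_max_left _ _)
  · refine le_trans (min_le_right _ _) (le_trans ?_ (le_max_right _ _))
    rw [div_le_one (by linarith [Set.mem_Ioi.mp T.2])]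
    linarith

lemma term_le_bebutov (T : Set.Ioi (0:ℝ)) :
    min (⨆ t : Set.Icc (-(T:ℝ)) (T:ℝ), dist (f t.1) (g t.1)) (1 / (T:ℝ)) ≤ bebutovDist f g :=
  le_ciSup (bddAbove_outer f g) T

lemma bebutovDist_nonneg : 0 ≤ bebutovDist f g := by
  refine le_trans ?_ (term_le_bebutov f g ⟨1, by norm_num⟩)
  refine le_min ?_ (by norm_num)
  refine le_trans dist_nonneg (le_ciSup (bddAbove_inner f g 1) ⟨0, by norm_num⟩)

lemma bebutovDist_le_of_forall (C : ℝ) (hC : 0 ≤ C) (h : ∀ u, dist (f u) (g u) ≤ C) :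
    bebutovDist f g ≤ C :=
  Real.iSup_le (fun T => le_trans (min_le_left _ _) (inner_le f g _ _ hC fun u _ => h u)) hC

lemma dist_zero_lt_of_bebutovDist_lt {δ : ℝ} (hδ : 0 < δ) (h : bebutovDist f g < δ) :
    dist (f 0) (g 0) < δ := by
  set T : Set.Ioi (0:ℝ) := ⟨1 / (2 * δ), by simp; positivity⟩ with hT
  have h1T : 1 / (T : ℝ) = 2 * δ := by rw [hT]; simp
  have hterm := term_le_bebutov f g T
  have hd0 : dist (f 0) (g 0) ≤ ⨆ t : Set.Icc (-(T:ℝ)) (T:ℝ), dist (f t.1) (g t.1) :=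
    le_ciSup (bddAbove_inner f g _) ⟨0, by constructor <;> [skip; positivity] <;> simp <;> positivity⟩
  rw [h1T] at hterm
  rcases min_cases (⨆ t : Set.Icc (-(T:ℝ)) (T:ℝ), dist (f t.1) (g t.1)) (2 * δ) with
    ⟨heq, _⟩ | ⟨heq, hle⟩
  · rw [heq] at hterm; linarith
  · rw [heq] at hterm; linarith
end aux

/-- uniform Cauchy property of translates -/
def UC {X : Type*} [MetricSpace X] (φ : C(ℝ, X)) (t : ℕ → ℝ) : Prop :=
  ∀ ε > (0:ℝ), ∃ N : ℕ, ∀ n ≥ N, ∀ m ≥ N, ∀ u : ℝ, dist (φ (u + t n)) (φ (u + t m)) ≤ ε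

lemma uc_of_muClass {X : Type*} [MetricSpace X] (φ : C(ℝ, X)) (t : ℕ → ℝ)
    (ht : t ∈ MuClass φ) : UC φ t := by
  obtain ⟨-, ψf, hψf⟩ := ht
  intro ε hε
  obtain ⟨N, hN⟩ := hψf (ε / 2) (by positivity)
  refine ⟨N, fun n hn m hm u => ?_⟩
  have h1 := dist_zero_lt_of_bebutovDist_lt _ _ (by positivity) (hN n hn u)
  have h2 := dist_zero_lt_of_bebutovDist_lt _ _ (by positivity) (hN m hm u)
  simp only [timeShift, ContinuousMap.coe_mk, zero_add] at h1 h2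
  calc dist (φ (u + t n)) (φ (u + t m))
      ≤ dist (φ (u + t n)) (ψf u 0) + dist (φ (u + t m)) (ψf u 0) := dist_triangle_right _ _ _
    _ ≤ ε := by linarith

lemma muClass_of_uc {X : Type*} [MetricSpace X] [CompleteSpace X] (φ : C(ℝ, X)) (t : ℕ → ℝ)
    (ht : UC φ t) : t ∈ MuClass φ := by
  -- pointwise limit
  have hcau : ∀ x : ℝ, CauchySeq (fun n => φ (x + t n)) := by
    intro x
    rw [Metric.cauchySeq_iff]
    intro ε hε
    obtain ⟨N, hN⟩ := ht (ε / 2) (by positivity)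
    exact ⟨N, fun m hm n hn => lt_of_le_of_lt (hN m hm n hn x) (by linarith)⟩
  choose χ hχ using fun x => cauchySeq_tendsto_of_complete (hcau x)
  -- uniform convergence bound
  have hunif : ∀ ε > (0:ℝ), ∃ N, ∀ n ≥ N, ∀ x : ℝ, dist (φ (x + t n)) (χ x) ≤ ε := by
    intro ε hε
    obtain ⟨N, hN⟩ := ht ε hε
    refine ⟨N, fun n hn x => ?_⟩
    have : Tendsto (fun m => dist (φ (x + t n)) (φ (x + t m))) atTop
        (𝓝 (dist (φ (x + t n)) (χ x))) :=
      (Continuous.tendsto (continuous_const.dist continuous_id) _).comp (hχ x)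
    refine le_of_tendsto this (eventually_atTop.2 ⟨N, fun m hm => hN n hn m hm x⟩)
  have hχc : Continuous χ := by
    have : TendstoUniformly (fun n x => φ (x + t n)) χ atTop := by
      rw [Metric.tendstoUniformly_iff]
      intro ε hε
      obtain ⟨N, hN⟩ := hunif (ε / 2) (by positivity)
      exact eventually_atTop.2 ⟨N, fun n hn x =>
        lt_of_le_of_lt (dist_comm (φ (x + t n)) (χ x) ▸ hN n hn x) (by linarith)⟩
    exact this.continuous (Eventually.of_forall fun n => by continuity).frequently
  set χC : C(ℝ, X) := ⟨χ, hχc⟩ with hχC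
  constructor
  · refine ⟨χC, ?_⟩
    rw [Metric.tendsto_atTop]
    intro ε hε
    obtain ⟨N, hN⟩ := hunif (ε / 2) (by positivity)
    refine ⟨N, fun n hn => ?_⟩
    have hle : bebutovDist (timeShift φ (t n)) χC ≤ ε / 2 :=
      bebutovDist_le_of_forall _ _ _ (by positivity) fun u => hN n hn u
    have hnn := bebutovDist_nonneg (timeShift φ (t n)) χC
    rw [Real.dist_eq, abs_of_nonneg (by simpa using hnn)]
    simpa using lt_of_le_of_lt hle (by linarith)
  · refine ⟨fun s => ⟨fun u => χ (u + s), by continuity⟩, ?_⟩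
    intro ε hε
    obtain ⟨N, hN⟩ := hunif (ε / 2) (by positivity)
    refine ⟨N, fun n hn s => ?_⟩
    have hle : bebutovDist (timeShift φ (s + t n)) ⟨fun u => χ (u + s), by continuity⟩ ≤ ε / 2 := by
      refine bebutovDist_le_of_forall _ _ _ (by positivity) fun u => ?_
      have := hN n hn (u + s)
      simpa [timeShift, add_assoc] using this
    exact lt_of_le_of_lt hle (by linarith)


section bohr
variable {Y : Type*} [MetricSpace Y] (ψ : C(ℝ, Y))

lemma shift_close (hψ : BohrAlmostPeriodic ψ) {ε : ℝ} (hε : 0 < ε) :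
    ∃ l > (0:ℝ), ∀ a : ℝ, ∃ r ∈ Set.Icc (0:ℝ) l, ∀ u : ℝ,
      dist (ψ (u + a)) (ψ (u + r)) < ε := by
  obtain ⟨l, hl, hRD⟩ := hψ ε hε
  refine ⟨l, hl, fun a => ?_⟩
  obtain ⟨τ, hτap, hτmem⟩ := hRD (-a)
  refine ⟨a + τ, ⟨by linarith [hτmem.1], by linarith [hτmem.2]⟩, fun u => ?_⟩
  have := hτap (u + a)
  rw [dist_comm]
  convert this using 3 <;> ring

lemma bohr_uniformContinuous (hψ : BohrAlmostPeriodic ψ) {ε : ℝ} (hε : 0 < ε) :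
    ∃ δ > (0:ℝ), ∀ x y : ℝ, |x - y| < δ → dist (ψ x) (ψ y) < ε := by
  obtain ⟨l, hl, hsc⟩ := shift_close ψ hψ (show (0:ℝ) < ε/3 by positivity)
  have huc : UniformContinuousOn ψ (Set.Icc (-1) (l+1)) :=
    isCompact_Icc.uniformContinuousOn_of_continuous (ψ.continuous.continuousOn)
  rw [Metric.uniformContinuousOn_iff] at huc
  obtain ⟨δ₀, hδ₀, hδ⟩ := huc (ε/3) (by positivity)
  refine ⟨min δ₀ 1, by positivity, fun x y hxy => ?_⟩
  obtain ⟨r, hr, hrc⟩ := hsc x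
  have h1 : dist (ψ x) (ψ r) < ε/3 := by simpa using hrc 0
  have h2 : dist (ψ y) (ψ (y - x + r)) < ε/3 := by
    have := hrc (y - x)
    convert this using 3 <;> ring
  have hxy1 : |x - y| < 1 := lt_of_lt_of_le hxy (min_le_right _ _)
  have hxy0 : |x - y| < δ₀ := lt_of_lt_of_le hxy (min_le_left _ _)
  have h3 : dist (ψ r) (ψ (y - x + r)) < ε/3 := by
    have habs := abs_lt.mp hxy1
    refine hδ r ⟨by linarith [hr.1], by linarith [hr.2]⟩ (y - x + r)
      ⟨by linarith [hr.1], by linarith [hr.2]⟩ ?_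
    rw [Real.dist_eq]
    have : r - (y - x + r) = x - y := by ring
    rw [this]
    exact hxy0
  calc dist (ψ x) (ψ y) ≤ dist (ψ x) (ψ r) + dist (ψ r) (ψ (y - x + r))
        + dist (ψ (y - x + r)) (ψ y) := dist_triangle4 _ _ _ _
    _ < ε := by
      have h2' : dist (ψ (y - x + r)) (ψ y) < ε/3 := by rw [dist_comm]; exact h2
      linarith

lemma bohr_bounded (hψ : BohrAlmostPeriodic ψ) :
    ∃ C : ℝ, ∀ x y : ℝ, dist (ψ x) (ψ y) ≤ C := by
  obtain ⟨l, hl, hsc⟩ := shift_close ψ hψ one_pos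
  obtain ⟨C₀, hC₀⟩ : ∃ C₀, ∀ p ∈ Set.Icc (0:ℝ) l, ∀ q ∈ Set.Icc (0:ℝ) l,
      dist (ψ p) (ψ q) ≤ C₀ := by
    have hb := (isCompact_Icc.image ψ.continuous (s := Set.Icc (0:ℝ) l)).isBounded
    rw [Metric.isBounded_iff] at hb
    obtain ⟨C₀, hC₀⟩ := hb
    exact ⟨C₀, fun p hp q hq => hC₀ ⟨p, hp, rfl⟩ ⟨q, hq, rfl⟩⟩
  refine ⟨1 + C₀ + 1, fun x y => ?_⟩
  obtain ⟨r, hr, hrc⟩ := hsc x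
  obtain ⟨r', hr', hrc'⟩ := hsc y
  have h1 : dist (ψ x) (ψ r) < 1 := by simpa using hrc 0
  have h2 : dist (ψ y) (ψ r') < 1 := by simpa using hrc' 0
  have h3 := hC₀ r hr r' hr'
  calc dist (ψ x) (ψ y) ≤ dist (ψ x) (ψ r) + dist (ψ r) (ψ r') + dist (ψ r') (ψ y) :=
        dist_triangle4 _ _ _ _
    _ ≤ 1 + C₀ + 1 := by
      have h2' : dist (ψ r') (ψ y) < 1 := by rw [dist_comm]; exact h2
      linarith

/-- Bochner property -/
lemma bochner_extract [CompleteSpace Y] (hψ : BohrAlmostPeriodic ψ) (h : ℕ → ℝ) :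
    ∃ k : ℕ → ℕ, StrictMono k ∧ UC ψ (h ∘ k) := by
  obtain ⟨C, hC⟩ := bohr_bounded ψ hψ
  set F : ℝ → BoundedContinuousFunction ℝ Y :=
    fun a => ⟨timeShift ψ a, C, fun x y => hC _ _⟩ with hF
  have hFcoe : ∀ a x, F a x = ψ (x + a) := fun a x => rfl
  have htb : TotallyBounded (Set.range F) := by
    rw [Metric.totallyBounded_iff]
    intro ε hε
    obtain ⟨l, hl, hsc⟩ := shift_close ψ hψ (show (0:ℝ) < ε/4 by positivity)
    obtain ⟨δ, hδpos, hδ⟩ := bohr_uniformContinuous ψ hψ (show (0:ℝ) < ε/4 by positivity)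
    refine ⟨F '' ((fun i : ℕ => (i : ℝ) * δ) '' (Set.Iic ⌊l / δ⌋₊)),
      ((Set.finite_Iic _).image _).image _, ?_⟩
    rintro x ⟨a, rfl⟩
    obtain ⟨r, hr, hrc⟩ := hsc a
    set i : ℕ := ⌊r / δ⌋₊ with hi
    have hi_le : i ≤ ⌊l / δ⌋₊ := Nat.floor_le_floor (by gcongr; exact hr.2)
    have hiδ : (i : ℝ) * δ ≤ r := by
      rw [hi]
      calc (⌊r / δ⌋₊ : ℝ) * δ ≤ r / δ * δ :=
        mul_le_mul_of_nonneg_right (Nat.floor_le (div_nonneg hr.1 hδpos.le)) hδpos.le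
      _ = r := by field_simp
    have hriδ : r - (i:ℝ) * δ < δ := by
      have := Nat.lt_floor_add_one (r / δ)
      have h2 : r / δ < (i:ℝ) + 1 := this
      have h3 := (div_lt_iff₀ hδpos).mp h2
      nlinarith
    refine Set.mem_biUnion ⟨(i:ℝ) * δ, ⟨i, hi_le, rfl⟩, rfl⟩ ?_
    rw [Metric.mem_ball]
    have hb1 : dist (F a) (F r) ≤ ε/4 := by
      rw [BoundedContinuousFunction.dist_le (by positivity)]
      exact fun u => (hrc u).le
    have hb2 : dist (F r) (F ((i:ℝ) * δ)) ≤ ε/4 := by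
      rw [BoundedContinuousFunction.dist_le (by positivity)]
      intro u
      refine (hδ (u + r) (u + (i:ℝ)*δ) ?_).le
      rw [show u + r - (u + (i:ℝ)*δ) = r - (i:ℝ)*δ by ring, abs_of_nonneg (by linarith)]
      exact hriδ
    calc dist (F a) (F ((i:ℝ)*δ)) ≤ dist (F a) (F r) + dist (F r) (F ((i:ℝ)*δ)) :=
          dist_triangle _ _ _
      _ ≤ ε/4 + ε/4 := add_le_add hb1 hb2
      _ < ε := by linarith
  have hcomp : IsCompact (closure (Set.range F)) :=
    TotallyBounded.isCompact_of_isClosed htb.closure isClosed_closure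
  obtain ⟨a, -, k, hk, hconv⟩ := hcomp.tendsto_subseq
    (x := fun n => F (h n)) (fun n => subset_closure (Set.mem_range_self _))
  refine ⟨k, hk, ?_⟩
  intro ε hε
  have hcau := hconv.cauchySeq
  rw [Metric.cauchySeq_iff] at hcau
  obtain ⟨N, hN⟩ := hcau ε hε
  refine ⟨N, fun n hn m hm u => ?_⟩
  have := BoundedContinuousFunction.dist_coe_le_dist (f := F (h (k n))) (g := F (h (k m))) u
  exact le_trans this (hN n hn m hm).le
end bohr



noncomputable def badSeq (A : ℝ → ℝ) : ℕ → ℝ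
  | n =>
    let M : ℕ := (Finset.range n).attach.sup fun i => ⌈|badSeq A i.1|⌉₊
    A (2 * M + 2) + (M + 1)
termination_by n => n
decreasing_by exact Finset.mem_range.mp i.2

lemma badSeq_diff_mem (A : ℝ → ℝ) {i n : ℕ} (hin : i < n) :
    ∃ l : ℝ, 0 < l ∧ badSeq A n - badSeq A i ∈ Set.Icc (A l) (A l + l) := by
  have heq : badSeq A n =
      A (2 * ((Finset.range n).attach.sup fun i => ⌈|badSeq A i.1|⌉₊) + 2)
        + (((Finset.range n).attach.sup fun i => ⌈|badSeq A i.1|⌉₊) + 1) := by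
    rw [badSeq]
  set M : ℕ := (Finset.range n).attach.sup fun i => ⌈|badSeq A i.1|⌉₊ with hM
  have hbound : |badSeq A i| ≤ (M : ℝ) := by
    have h1 : ⌈|badSeq A i|⌉₊ ≤ M :=
      Finset.le_sup (f := fun i : {x // x ∈ Finset.range n} => ⌈|badSeq A i.1|⌉₊)
        (Finset.mem_attach _ ⟨i, Finset.mem_range.mpr hin⟩)
    calc |badSeq A i| ≤ (⌈|badSeq A i|⌉₊ : ℝ) := Nat.le_ceil _
      _ ≤ (M : ℝ) := Nat.cast_le.mpr h1
  obtain ⟨hb1, hb2⟩ := abs_le.mp hbound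
  refine ⟨2 * (M:ℝ) + 2, by positivity, ?_, ?_⟩
  · rw [heq]; linarith
  · rw [heq]; linarith


/-- If `𝔐^u_ψ ⊆ 𝔐^u_φ` and `ψ` is Bohr almost periodic, then `φ` is Bohr almost
periodic. -/
theorem bohrAlmostPeriodic_of_MuClass_subset
    {X Y : Type*} [MetricSpace X] [CompleteSpace X] [MetricSpace Y] [CompleteSpace Y]
    (φ : C(ℝ, X)) (ψ : C(ℝ, Y)) (h : MuClass ψ ⊆ MuClass φ)
    (hψ : BohrAlmostPeriodic ψ) : BohrAlmostPeriodic φ := by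
  intro ε hε
  by_contra hnot
  have hS : ∀ l > (0:ℝ), ∃ a : ℝ, ∀ τ ∈ {τ : ℝ | IsAlmostPeriod φ ε τ},
      τ ∉ Set.Icc a (a + l) := by
    unfold RelativelyDense at hnot
    push_neg at hnot
    exact hnot
  set A : ℝ → ℝ := fun l => if hl : 0 < l then (hS l hl).choose else 0 with hAdef
  have hA : ∀ l : ℝ, 0 < l → ∀ τ ∈ {τ : ℝ | IsAlmostPeriod φ ε τ},
      τ ∉ Set.Icc (A l) (A l + l) := by
    intro l hl
    have : A l = (hS l hl).choose := by rw [hAdef]; simp [dif_pos hl]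
    rw [this]
    exact (hS l hl).choose_spec
  set v : ℕ → ℝ := badSeq A with hv
  have hvnap : ∀ i j : ℕ, i < j → ¬ IsAlmostPeriod φ ε (v j - v i) := by
    intro i j hij hap
    obtain ⟨l, hl, hmem⟩ := badSeq_diff_mem A hij
    exact hA l hl _ hap hmem
  obtain ⟨k, hk, huc⟩ := bochner_extract ψ hψ v
  have hmu : (v ∘ k) ∈ MuClass ψ := muClass_of_uc ψ _ huc
  have hucφ := uc_of_muClass φ _ (h hmu)
  obtain ⟨N, hN⟩ := hucφ (ε/2) (by positivity)
  have hnap := hvnap (k N) (k (N+1)) (hk (Nat.lt_succ_self N))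
  unfold IsAlmostPeriod at hnap
  push_neg at hnap
  obtain ⟨t₀, ht₀⟩ := hnap
  have hdle := hN (N+1) (Nat.le_succ N) N le_rfl (t₀ - v (k N))
  have e1 : t₀ - v (k N) + (v ∘ k) (N+1) = t₀ + (v (k (N+1)) - v (k N)) := by
    simp only [Function.comp_apply]; ring
  have e2 : t₀ - v (k N) + (v ∘ k) N = t₀ := by
    simp only [Function.comp_apply]; ring
  rw [e1, e2] at hdle
  linarith
end
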